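/- Let (X,𝖽) be a metric doubling metric space and let ν₁, ν₂ be finite Borel measures on X. Suppose there exist C₁ ∈ (0,∞) and A₁ ∈ (1,∞) such that ν₁(B_𝖽(x,r)) ≤ C₁·ν₂(B_𝖽(x,A₁·r)) for all x ∈ X and r > 0. Then there exists C₂ > 0, depending only on C₁, A₁ and the doubling constant of (X,𝖽), such that ν₁(B) ≤ C₂·ν₂(B) for every Borel set B ⊆ X. -/

import Mathlib

open scoped ENNReal NNReal

namespace Paper

variable {V : Type*}

/-- A combinatorial path in a simple graph `G`: a list of at least two vertices in which
consecutive vertices are adjacent.  Paths are identified with their vertex sets. -/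
def IsPathList (G : SimpleGraph V) (θ : List V) : Prop :=
  θ.Chain' G.Adj ∧ 2 ≤ θ.length

/-- The `ρ`-length of a path `θ` (identified with its vertex set): the sum of `ρ`
over the distinct vertices of `θ`. -/
noncomputable def pathLen [DecidableEq V] (ρ : V → ℝ≥0) (θ : List V) : ℝ≥0∞ :=
  ∑ v ∈ θ.toFinset, (ρ v : ℝ≥0∞)

/-- `ρ` is admissible for the path family `Θ`. -/
def AdmissibleFor [DecidableEq V] (Θ : Set (List V)) (ρ : V → ℝ≥0) : Prop :=
  ∀ θ ∈ Θ, 1 ≤ pathLen ρ θ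

/-- The combinatorial `p`-modulus of a path family. -/
noncomputable def pMod [DecidableEq V] (p : ℝ) (Θ : Set (List V)) : ℝ≥0∞ :=
  ⨅ (ρ : V → ℝ≥0) (_ : AdmissibleFor Θ ρ), ∑' v : V, (ρ v : ℝ≥0∞) ^ p

/-- Open ball in the graph metric. -/
def gBall (G : SimpleGraph V) (x : V) (r : ℝ) : Set V :=
  {y | (G.dist x y : ℝ) < r}

/-- Closed ball in the graph metric. -/
def gcBall (G : SimpleGraph V) (x : V) (r : ℝ) : Set V :=
  {y | (G.dist x y : ℝ) ≤ r}

/-- Diameter (in `ℝ≥0∞`) of a set of vertices, with respect to the graph metric. -/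
noncomputable def gDiam (G : SimpleGraph V) (A : Set V) : ℝ≥0∞ :=
  ⨆ x ∈ A, ⨆ y ∈ A, (G.dist x y : ℝ≥0∞)

/-- Distance (in `ℝ≥0∞`) between two sets of vertices. -/
noncomputable def gDist (G : SimpleGraph V) (A B : Set V) : ℝ≥0∞ :=
  ⨅ x ∈ A, ⨅ y ∈ B, (G.dist x y : ℝ≥0∞)

/-- `PathIn G A₀ A₁ A₂ θ` : `θ` is a path lying in `A₂`, starting in `A₀` and ending in `A₁`. -/
def PathIn (G : SimpleGraph V) (A₀ A₁ A₂ : Set V) (θ : List V) : Prop :=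
  IsPathList G θ ∧ (∀ v ∈ θ, v ∈ A₂) ∧
    ∀ h : θ ≠ [], θ.head h ∈ A₀ ∧ θ.getLast h ∈ A₁

/-- A subset of the vertex set is connected if the induced subgraph is connected. -/
def ConnSubset (G : SimpleGraph V) (A : Set V) : Prop :=
  (G.induce A).Connected

/-- Local finiteness of a graph. -/
def LocFin (G : SimpleGraph V) : Prop := ∀ v : V, (G.neighborSet v).Finite

/-- `deg(G) ≤ D` : a uniform bound on vertex degrees. -/
def DegLE (G : SimpleGraph V) (D : ℕ) : Prop :=
  ∀ v : V, (G.neighborSet v).Finite ∧ (G.neighborSet v).ncard ≤ D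

/-- The combinatorial ball Loewner condition `BCL_p(ζ)` with explicit constants
`A`, `cB(⬝)`, `LB(⬝)`. -/
def BCLwith [DecidableEq V] (G : SimpleGraph V) (p ζ A : ℝ) (cB LB : ℝ → ℝ) : Prop :=
  1 ≤ A ∧ (∀ κ : ℝ, 0 < κ → 0 < cB κ ∧ 0 < LB κ) ∧
    ∀ κ : ℝ, 0 < κ → ∀ R : ℝ, 1 ≤ R →
      ENNReal.ofReal (A * R) < gDiam G Set.univ →
      ∀ x₁ x₂ : V,
        gDist G (gBall G x₁ R) (gBall G x₂ R) ≤ ENNReal.ofReal (κ * R) →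
        ENNReal.ofReal (cB κ * R ^ ζ) ≤
          pMod p {θ | PathIn G (gBall G x₁ R) (gBall G x₂ R) Set.univ θ ∧
            gDiam G {v | v ∈ θ} ≤ ENNReal.ofReal (LB κ * R)}

/-- Discrete `p`-energy (`ℝ≥0∞`-valued) of `f` over the edges with both endpoints in `A`. -/
noncomputable def pEnergy (G : SimpleGraph V) (p : ℝ) (A : Set V) (f : V → ℝ) : ℝ≥0∞ :=
  (∑' e : {e : V × V // G.Adj e.1 e.2 ∧ e.1 ∈ A ∧ e.2 ∈ A},
      ENNReal.ofReal (|f e.1.1 - f e.1.2| ^ p)) / 2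

/-- Average of `f` over the ball `B(x,R)` (with respect to the counting measure). -/
noncomputable def ballAvg (G : SimpleGraph V) (x : V) (R : ℝ) (f : V → ℝ) : ℝ :=
  (∑ᶠ y ∈ gBall G x R, f y) / ((gBall G x R).ncard : ℝ)

/-- The `(p,p)`-Poincaré inequality `PI_p(β)` with constants `CPI`, `API`. -/
def PIineq (G : SimpleGraph V) (p β CPI API : ℝ) : Prop :=
  ∀ (x : V) (R : ℝ), 1 ≤ R → ∀ f : V → ℝ,
    (∑' y : gBall G x R, ENNReal.ofReal (|f y - ballAvg G x R f| ^ p)) ≤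
      ENNReal.ofReal (CPI * R ^ β) * pEnergy G p (gBall G x (API * R)) f

/-- Truncated maximal function of the gradient: `M_R^p[f](x)`. -/
noncomputable def maxEnergy (G : SimpleGraph V) (p : ℝ) (f : V → ℝ) (R : ℝ) (x : V) : ℝ≥0∞ :=
  ⨆ (r : ℝ) (_ : 0 < r) (_ : r < R),
    pEnergy G p (gBall G x r) f / ((gBall G x r).ncard : ℝ≥0∞)

/-- The two-point estimate `TP_p(β)` with constant `CTP`. -/
def TPineq (G : SimpleGraph V) (p β CTP : ℝ) : Prop :=
  ∀ (z : V) (R : ℝ), 1 ≤ R → ∀ f : V → ℝ,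
    ∀ x ∈ gBall G z (CTP⁻¹ * R), ∀ y ∈ gBall G z (CTP⁻¹ * R),
      ENNReal.ofReal (|f x - f y| ^ p) ≤
        ENNReal.ofReal (CTP * R ^ β) * (maxEnergy G p f R x + maxEnergy G p f R y)

/-- The volume growth condition `VD(α)` with constant `CD`. -/
def VDgrowth (G : SimpleGraph V) (α CD : ℝ) : Prop :=
  ∀ (x y : V) (r R : ℝ), 1 ≤ r → r ≤ R →
    (gBall G x R).Finite ∧
      ((gBall G x R).ncard : ℝ) ≤
        CD * (((G.dist x y : ℝ) + R) / r) ^ α * ((gBall G y r).ncard : ℝ)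

/-- `d_f`-Ahlfors regularity of the graph `AR(d_f)` with constant `CAR`. -/
def ARreg (G : SimpleGraph V) (df CAR : ℝ) : Prop :=
  ∀ (x : V) (R : ℝ), 1 ≤ R → ENNReal.ofReal R ≤ gDiam G Set.univ →
    (gBall G x R).Finite ∧
      CAR⁻¹ * R ^ df ≤ ((gBall G x R).ncard : ℝ) ∧
      ((gBall G x R).ncard : ℝ) ≤ CAR * R ^ df

/-- Discrete `p`-capacity `cap_p(A₀, A₁; A₂)`. -/
noncomputable def pCap (G : SimpleGraph V) (p : ℝ) (A₀ A₁ A₂ : Set V) : ℝ≥0∞ :=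
  ⨅ (f : V → ℝ) (_ : ∀ x ∈ A₀, f x = 0) (_ : ∀ x ∈ A₁, f x = 1), pEnergy G p A₂ f

/-- The capacity upper bound `cap_{p,≤}(β)` with constants `Ccap`, `Acap`. -/
def CapUB (G : SimpleGraph V) (p β Ccap Acap : ℝ) : Prop :=
  ∀ (x : V) (R : ℝ), 1 ≤ R →
    ENNReal.ofReal (Acap * R) < gDiam G Set.univ →
    pCap G p (gBall G x R) ((gBall G x (2 * R))ᶜ) Set.univ ≤
      ENNReal.ofReal (Ccap * ((gBall G x R).ncard : ℝ) / R ^ β)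

/-- The discrete `p`-Laplacian. -/
noncomputable def pLap (G : SimpleGraph V) (p : ℝ) (f : V → ℝ) (x : V) : ℝ :=
  (∑ᶠ y ∈ G.neighborSet x, Real.sign (f y - f x) * |f y - f x| ^ (p - 1)) /
    ((G.neighborSet x).ncard : ℝ)

/-- The graph closure `Ā = A ∪ ∂A` of a vertex set. -/
def vClosure (G : SimpleGraph V) (A : Set V) : Set V :=
  A ∪ {x | ∃ y ∈ A, G.Adj x y}

/-- Real-valued sum of a symmetric function over the unordered edges within `A`. -/
noncomputable def edgeSum (G : SimpleGraph V) (A : Set V) (F : V → V → ℝ) : ℝ :=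
  (∑' e : {e : V × V // G.Adj e.1 e.2 ∧ e.1 ∈ A ∧ e.2 ∈ A}, F e.1.1 e.1.2) / 2

/-- The signed `p`-energy pairing `𝔈_p^G(f; g)`. -/
noncomputable def pEnergySigned (G : SimpleGraph V) (p : ℝ) (f g : V → ℝ) : ℝ :=
  edgeSum G Set.univ (fun x y => Real.sign (f y - f x) * |f y - f x| ^ (p - 1) * (g y - g x))

/-- Real-valued discrete `p`-energy `𝔈_p^G(f)`. -/
noncomputable def pEnergyReal (G : SimpleGraph V) (p : ℝ) (f : V → ℝ) : ℝ :=
  edgeSum G Set.univ (fun x y => |f x - f y| ^ p)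

end Paper
open Metric MeasureTheory Set

lemma aux_cover {X : Type} [MetricSpace X] {N : ℕ}
    (hdbl : ∀ (x : X) (r : ℝ), 0 < r → ∃ s : Finset X, s.card ≤ N ∧
      Metric.ball x r ⊆ ⋃ y ∈ s, Metric.ball y (r / 2)) :
    ∀ (j : ℕ) (x : X) (r : ℝ), 0 < r → ∃ s : Finset X, s.card ≤ (N + 1) ^ j ∧
      Metric.ball x r ⊆ ⋃ y ∈ s, Metric.ball y (r / 2 ^ j) := by
  classical
  intro j
  induction j with
  | zero => intro x r hr; exact ⟨{x}, by simp, by simp⟩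
  | succ j ih =>
    intro x r hr
    obtain ⟨s, hcard, hcov⟩ := ih x r hr
    have h2 : (0:ℝ) < r / 2 ^ j := by positivity
    choose t ht hcovt using fun y : X => hdbl y (r / 2 ^ j) h2
    refine ⟨s.biUnion t, ?_, ?_⟩
    · calc (s.biUnion t).card ≤ ∑ y ∈ s, (t y).card := Finset.card_biUnion_le
        _ ≤ ∑ _y ∈ s, N := Finset.sum_le_sum fun y _ => ht y
        _ = s.card * N := by rw [Finset.sum_const, smul_eq_mul]
        _ ≤ (N+1)^j * (N+1) := Nat.mul_le_mul hcard (Nat.le_succ N)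
        _ = (N+1)^(j+1) := (pow_succ _ _).symm
    · intro z hz
      obtain ⟨y, hy, hzy⟩ := Set.mem_iUnion₂.mp (hcov hz)
      obtain ⟨w, hw, hzw⟩ := Set.mem_iUnion₂.mp (hcovt y hzy)
      refine Set.mem_iUnion₂.mpr ⟨w, Finset.mem_biUnion.mpr ⟨y, hy, hw⟩, ?_⟩
      have : r / 2 ^ j / 2 = r / 2 ^ (j+1) := by ring
      rwa [this] at hzw


lemma aux_sep {X : Type} [MetricSpace X] [Nonempty X] {N : ℕ}
    (hdbl : ∀ (x : X) (r : ℝ), 0 < r → ∃ s : Finset X, s.card ≤ N ∧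
      Metric.ball x r ⊆ ⋃ y ∈ s, Metric.ball y (r / 2)) :
    ∃ D : Set X, D.Countable ∧ Dense D := by
  obtain ⟨x₀⟩ := ‹Nonempty X›
  choose s _hs hcov using fun (n j : ℕ) => aux_cover hdbl j x₀ ((n:ℝ)+1) (by positivity)
  refine ⟨⋃ (n : ℕ) (j : ℕ), (s n j : Set X),
    Set.countable_iUnion (fun n => Set.countable_iUnion fun j => (s n j).countable_toSet), ?_⟩
  rw [Metric.dense_iff]
  intro y ε hε
  obtain ⟨n, hn⟩ : ∃ n : ℕ, dist x₀ y < (n:ℝ)+1 := by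
    obtain ⟨n, hn⟩ := exists_nat_gt (dist x₀ y)
    exact ⟨n, by linarith⟩
  obtain ⟨j, hj⟩ : ∃ j : ℕ, ((n:ℝ)+1)/ε < 2 ^ j := pow_unbounded_of_one_lt _ one_lt_two
  have hj' : ((n:ℝ)+1) / 2 ^ j < ε := by
    rw [div_lt_iff₀ (by positivity)]
    rw [div_lt_iff₀ hε] at hj
    linarith [hj]
  have hy : y ∈ Metric.ball x₀ ((n:ℝ)+1) := by rwa [Metric.mem_ball, dist_comm]
  obtain ⟨c, hc, hyc⟩ := Set.mem_iUnion₂.mp (hcov n j hy)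
  refine ⟨c, ?_, by exact Set.mem_iUnion₂.mpr ⟨n, j, hc⟩⟩
  rw [Metric.mem_ball]
  rw [Metric.mem_ball] at hyc
  calc dist c y = dist y c := dist_comm _ _
    _ < ((n:ℝ)+1) / 2 ^ j := hyc
    _ < ε := hj'


lemma aux_count {X : Type} [MetricSpace X] {N k : ℕ}
    (hdbl : ∀ (x : X) (r : ℝ), 0 < r → ∃ s : Finset X, s.card ≤ N ∧
      Metric.ball x r ⊆ ⋃ y ∈ s, Metric.ball y (r / 2))
    (z : X) (a R : ℝ) (ha : 0 < a) (hR : 0 < R) (hRa : R / 2 ^ k < a / 2)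
    (F : Finset X)
    (hsep : ∀ b ∈ F, ∀ b' ∈ F, b ≠ b' → a ≤ dist b b')
    (hmem : ∀ b ∈ F, b ∈ Metric.ball z R) :
    F.card ≤ (N + 1) ^ k := by
  classical
  obtain ⟨t, htc, htcov⟩ := aux_cover hdbl k z R hR
  have h : ∀ b ∈ F, ∃ y ∈ t, b ∈ Metric.ball y (R / 2 ^ k) := by
    intro b hb
    obtain ⟨y, hy, hby⟩ := Set.mem_iUnion₂.mp (htcov (hmem b hb))
    exact ⟨y, hy, hby⟩
  choose! f hf1 hf2 using h
  calc F.card ≤ t.card := by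
        apply Finset.card_le_card_of_injOn f (fun b hb => hf1 b hb)
        intro b hb b' hb' hfe
        by_contra hne
        have h1 := hf2 b hb
        have h2 := hf2 b' hb'
        rw [Metric.mem_ball] at h1 h2
        have : dist b b' < a := by
          calc dist b b' ≤ dist b (f b) + dist (f b') b' := by
                rw [hfe]; exact dist_triangle _ _ _
            _ < R / 2 ^ k + R / 2 ^ k := by rw [dist_comm (f b') b']; linarith
            _ < a := by linarith
        exact absurd this (not_lt.mpr (hsep b hb b' hb' hne))
    _ ≤ (N+1)^k := htc

lemma aux_core {X : Type} [MetricSpace X] [MeasurableSpace X] [BorelSpace X]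
    {C₁ A₁ : ℝ} (hC₁ : 0 < C₁) (hA₁ : 1 < A₁) {N k : ℕ} (hk : 26 * A₁ < 2 ^ k)
    (hdbl : ∀ (x : X) (r : ℝ), 0 < r → ∃ s : Finset X, s.card ≤ N ∧
      Metric.ball x r ⊆ ⋃ y ∈ s, Metric.ball y (r / 2))
    (ν₁ ν₂ : MeasureTheory.Measure X)
    (hcomp : ∀ (x : X) (r : ℝ), 0 < r →
      ν₁ (Metric.ball x r) ≤ ENNReal.ofReal C₁ * ν₂ (Metric.ball x (A₁ * r)))
    (U : Set X) (hUo : IsOpen U)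
    (r a : X → ℝ)
    (hr0 : ∀ x ∈ U, 0 < r x) (hr1 : ∀ x ∈ U, r x ≤ 1)
    (hin : ∀ x ∈ U, Metric.ball x (6 * A₁ * r x) ⊆ U)
    (ha0 : ∀ z ∈ U, 0 < a z)
    (hlow : ∀ z ∈ U, ∀ b ∈ U, dist z b < 6 * A₁ * r b →
      a z ≤ r b ∧ dist z b ≤ 12 * A₁ * a z) :
    ν₁ U ≤ ENNReal.ofReal C₁ * (((N:ℝ≥0∞) + 1) ^ k * ν₂ U) := by
  classical
  have hA₀ : (0:ℝ) < A₁ := lt_trans one_pos hA₁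
  rcases U.eq_empty_or_nonempty with rfl | ⟨x₀, hx₀⟩
  · simp
  haveI : Nonempty X := ⟨x₀⟩
  obtain ⟨D, hDc, hDd⟩ := aux_sep hdbl
  -- Vitali covering
  obtain ⟨u, hut, hdisj, hcov⟩ :=
    Vitali.exists_disjoint_subfamily_covering_enlargement_closedBall U (id : X → X) r 1
      (fun x hx => hr1 x hx) 5 (by norm_num)
  -- u is countable
  have hcnt : u.Countable := by
    have h : ∀ b ∈ u, ∃ p, p ∈ Metric.ball b (r b) ∩ D := by
      intro b hb
      exact Metric.dense_iff.mp hDd b (r b) (hr0 b (hut hb))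
    choose! p hp using h
    refine Set.MapsTo.countable_of_injOn (f := p) (t := D)
      (fun b hb => (hp b hb).2) ?_ hDc
    intro b hb b' hb' he
    by_contra hne
    have h1 : p b ∈ Metric.closedBall (id b) (r b) :=
      Metric.ball_subset_closedBall (hp b hb).1
    have h2 : p b ∈ Metric.closedBall (id b') (r b') := by
      rw [he]; exact Metric.ball_subset_closedBall (hp b' hb').1
    exact Set.disjoint_left.mp (hdisj hb hb' hne) h1 h2
  -- coverage by balls of radius 6 r b
  have hUsub : U ⊆ ⋃ b ∈ u, Metric.ball b (6 * r b) := by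
    intro x hx
    obtain ⟨b, hb, hsub⟩ := hcov x hx
    have hx' : x ∈ Metric.closedBall (id b) (5 * r b) :=
      hsub (Metric.mem_closedBall_self (le_of_lt (hr0 x hx)))
    refine Set.mem_iUnion₂.mpr ⟨b, hb, ?_⟩
    rw [Metric.mem_closedBall] at hx'
    rw [Metric.mem_ball]
    have := hr0 b (hut hb)
    calc dist x b ≤ 5 * r b := hx'
      _ < 6 * r b := by linarith
  haveI := hcnt.to_subtype
  set sB : X → Set X := fun b => Metric.ball b (6 * A₁ * r b) with hsB
  have hstep : ∀ b : u, ν₁ (Metric.ball (b:X) (6 * r (b:X))) ≤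
      ENNReal.ofReal C₁ * ν₂ (sB (b:X)) := by
    rintro ⟨b, hb⟩
    have hrb := hr0 b (hut hb)
    have := hcomp b (6 * r b) (by linarith)
    have he : A₁ * (6 * r b) = 6 * A₁ * r b := by ring
    rwa [he] at this
  have key : ∑' b : u, ν₂ (sB (b:X)) ≤ ((N:ℝ≥0∞) + 1) ^ k * ν₂ U := by
    have hmeas : ∀ b : u, MeasurableSet (sB (b:X)) := fun b => measurableSet_ball
    have hpt : ∀ z : X, ∑' b : u, (sB (b:X)).indicator (1 : X → ℝ≥0∞) z ≤
        U.indicator (fun _ => ((N:ℝ≥0∞) + 1) ^ k) z := by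
      intro z
      by_cases hz : z ∈ U
      · rw [Set.indicator_of_mem hz]
        refine ENNReal.summable.tsum_le_of_sum_le ?_
        intro F
        -- separate the filtered set
        set G : Finset u := F.filter (fun b => z ∈ sB (b:X)) with hG
        have hsum : ∑ b ∈ F, (sB (b:X)).indicator (1 : X → ℝ≥0∞) z = (G.card : ℝ≥0∞) := by
          rw [hG]
          rw [← Finset.sum_boole]
          apply Finset.sum_congr rfl
          intro b _
          simp [Set.indicator_apply]
        rw [hsum]
        -- count G
        have hGcard : (G.image (Subtype.val)).card ≤ (N + 1) ^ k := by
          apply aux_count hdbl z (a z) (13 * A₁ * a z) (ha0 z hz)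
            (by have := ha0 z hz; positivity) ?_ _ ?_ ?_
          · rw [div_lt_div_iff₀ (by positivity) (by norm_num)]
            have haz := ha0 z hz
            nlinarith [haz, hk]
          · -- separation
            intro b hbm b' hbm' hne
            obtain ⟨b₁, hb₁, rfl⟩ := Finset.mem_image.mp hbm
            obtain ⟨b₂, hb₂, rfl⟩ := Finset.mem_image.mp hbm'
            have hb₁u := b₁.2
            have hb₂u := b₂.2
            have hz₁ : z ∈ sB (b₁:X) := (Finset.mem_filter.mp hb₁).2
            have hlow₁ := hlow z hz (b₁:X) (hut hb₁u) (by
              rw [hsB] at hz₁; rw [Metric.mem_ball] at hz₁; exact hz₁)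
            -- disjointness gives dist > r b₁
            have hne' : (b₁:X) ≠ (b₂:X) := hne
            have hdd := hdisj hb₁u hb₂u hne'
            have hd : r (b₁:X) < dist (b₁:X) (b₂:X) := by
              by_contra hle
              push_neg at hle
              have h1 : (b₂:X) ∈ Metric.closedBall (id (b₁:X)) (r (b₁:X)) := by
                rw [Metric.mem_closedBall, dist_comm]; exact hle
              have h2 : (b₂:X) ∈ Metric.closedBall (id (b₂:X)) (r (b₂:X)) :=
                Metric.mem_closedBall_self (le_of_lt (hr0 _ (hut hb₂u)))
              exact Set.disjoint_left.mp hdd h1 h2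
            calc a z ≤ r (b₁:X) := hlow₁.1
              _ ≤ dist (b₁:X) (b₂:X) := le_of_lt hd
          · -- membership
            intro b hbm
            obtain ⟨b₁, hb₁, rfl⟩ := Finset.mem_image.mp hbm
            have hz₁ : z ∈ sB (b₁:X) := (Finset.mem_filter.mp hb₁).2
            have hlow₁ := hlow z hz (b₁:X) (hut b₁.2) (by
              rw [hsB] at hz₁; rw [Metric.mem_ball] at hz₁; exact hz₁)
            rw [Metric.mem_ball, dist_comm]
            have haz := ha0 z hz
            calc dist z (b₁:X) ≤ 12 * A₁ * a z := hlow₁.2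
              _ < 13 * A₁ * a z := by nlinarith
        have hGc : G.card ≤ (N + 1) ^ k := by
          rwa [Finset.card_image_of_injective _ Subtype.val_injective] at hGcard
        calc (G.card : ℝ≥0∞) ≤ (((N+1)^k : ℕ) : ℝ≥0∞) := by exact_mod_cast hGc
          _ = ((N:ℝ≥0∞) + 1) ^ k := by push_cast; ring
      · rw [Set.indicator_of_notMem hz]
        have : ∀ b : u, (sB (b:X)).indicator (1 : X → ℝ≥0∞) z = 0 := by
          intro b
          apply Set.indicator_of_notMem
          intro hzb
          exact hz (hin (b:X) (hut b.2) hzb)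
        simp [this]
    calc ∑' b : u, ν₂ (sB (b:X))
        = ∑' b : u, ∫⁻ z, (sB (b:X)).indicator 1 z ∂ν₂ := by
          exact tsum_congr fun b => (lintegral_indicator_one (hmeas b)).symm
      _ = ∫⁻ z, ∑' b : u, (sB (b:X)).indicator 1 z ∂ν₂ :=
          (lintegral_tsum fun b => ((measurable_const.indicator (hmeas b)).aemeasurable)).symm
      _ ≤ ∫⁻ z, U.indicator (fun _ => ((N:ℝ≥0∞) + 1) ^ k) z ∂ν₂ := lintegral_mono hpt
      _ = ((N:ℝ≥0∞) + 1) ^ k * ν₂ U := by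
          rw [lintegral_indicator_const hUo.measurableSet]
  calc ν₁ U ≤ ν₁ (⋃ b ∈ u, Metric.ball b (6 * r b)) := measure_mono hUsub
    _ ≤ ∑' b : u, ν₁ (Metric.ball (b:X) (6 * r (b:X))) := measure_biUnion_le ν₁ hcnt _
    _ ≤ ∑' b : u, ENNReal.ofReal C₁ * ν₂ (sB (b:X)) := ENNReal.tsum_le_tsum hstep
    _ = ENNReal.ofReal C₁ * ∑' b : u, ν₂ (sB (b:X)) := ENNReal.tsum_mul_left
    _ ≤ ENNReal.ofReal C₁ * (((N:ℝ≥0∞) + 1) ^ k * ν₂ U) := by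
        exact mul_le_mul_right key _

/-- comparison of measures from comparison on balls, Lemma `l:ac`.
Let `(X,𝖽)` be a metric doubling metric space (doubling constant `N`) and `ν₁, ν₂`
finite Borel measures with `ν₁(B(x,r)) ≤ C₁·ν₂(B(x,A₁r))` for all `x`, `r > 0`.
Then there is `C₂ > 0`, depending only on `C₁`, `A₁` and `N`, such that
`ν₁(B) ≤ C₂·ν₂(B)` for every Borel set `B`. -/
theorem statement19 (C₁ A₁ : ℝ) (hC₁ : 0 < C₁) (hA₁ : 1 < A₁) (N : ℕ) :
    ∃ C₂ : ℝ, 0 < C₂ ∧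
      ∀ (X : Type) [MetricSpace X] [MeasurableSpace X] [BorelSpace X],
        (∀ (x : X) (r : ℝ), 0 < r → ∃ s : Finset X, s.card ≤ N ∧
          Metric.ball x r ⊆ ⋃ y ∈ s, Metric.ball y (r / 2)) →
        ∀ ν₁ ν₂ : MeasureTheory.Measure X,
          MeasureTheory.IsFiniteMeasure ν₁ → MeasureTheory.IsFiniteMeasure ν₂ →
          (∀ (x : X) (r : ℝ), 0 < r →
            ν₁ (Metric.ball x r) ≤ ENNReal.ofReal C₁ * ν₂ (Metric.ball x (A₁ * r))) →
          ∀ B : Set X, MeasurableSet B → ν₁ B ≤ ENNReal.ofReal C₂ * ν₂ B := by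
  have hA₀ : (0:ℝ) < A₁ := lt_trans one_pos hA₁
  obtain ⟨k, hk⟩ : ∃ k : ℕ, 26 * A₁ < 2 ^ k := pow_unbounded_of_one_lt _ one_lt_two
  refine ⟨C₁ * ((N:ℝ) + 1) ^ k, by positivity, ?_⟩
  intro X _ _ _ hdbl ν₁ ν₂ hfin₁ hfin₂ hcomp B hB
  haveI := hfin₁; haveI := hfin₂
  set c₂ : ℝ≥0∞ := ENNReal.ofReal (C₁ * ((N:ℝ) + 1) ^ k) with hc₂
  have hc₂e : c₂ = ENNReal.ofReal C₁ * ((N:ℝ≥0∞) + 1) ^ k := by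
    rw [hc₂, ENNReal.ofReal_mul hC₁.le, ENNReal.ofReal_pow (by positivity)]
    congr 1
    rw [ENNReal.ofReal_add (by positivity) zero_le_one]
    simp [ENNReal.ofReal_natCast]
  -- step 1: the estimate for open sets
  have hopen : ∀ U : Set X, IsOpen U → ν₁ U ≤ c₂ * ν₂ U := by
    intro U hUo
    rw [hc₂e, mul_assoc]
    by_cases hUc : Uᶜ.Nonempty
    · -- Whitney-type radii
      set d : X → ℝ := fun x => Metric.infDist x Uᶜ with hd
      have hd_pos : ∀ x ∈ U, 0 < d x := by
        intro x hx
        exact (hUo.isClosed_compl.notMem_iff_infDist_pos hUc).mp (by simpa using hx)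
      have hdLip : ∀ x y : X, d x ≤ d y + dist x y := fun x y =>
        Metric.infDist_le_infDist_add_dist
      refine aux_core hC₁ hA₁ hk hdbl ν₁ ν₂ hcomp U hUo
        (fun x => min 1 (d x / (20 * A₁))) (fun z => min 1 (d z / (26 * A₁)))
        ?_ ?_ ?_ ?_ ?_
      · intro x hx
        exact lt_min one_pos (by have := hd_pos x hx; positivity)
      · intro x hx; exact min_le_left _ _
      · intro x hx y hy
        rw [Metric.mem_ball] at hy
        by_contra hyU
        have hyc : y ∈ Uᶜ := hyU
        have h1 : d x ≤ dist x y := Metric.infDist_le_dist_of_mem hyc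
        have h2 : 6 * A₁ * min 1 (d x / (20 * A₁)) ≤ 6 * A₁ * (d x / (20 * A₁)) := by
          apply mul_le_mul_of_nonneg_left (min_le_right _ _) (by positivity)
        have h3 : 6 * A₁ * (d x / (20 * A₁)) = 3 / 10 * d x := by field_simp; ring
        have hdx := hd_pos x hx
        rw [dist_comm] at hy
        nlinarith [hy, h1, h2, h3]
      · intro z hz
        exact lt_min one_pos (by have := hd_pos z hz; positivity)
      · intro z hz b hb hdzb
        have hdz := hd_pos z hz
        have hdb := hd_pos b hb
        have h2 : 6 * A₁ * min 1 (d b / (20 * A₁)) ≤ 6 * A₁ * (d b / (20 * A₁)) := by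
          apply mul_le_mul_of_nonneg_left (min_le_right _ _) (by positivity)
        have h2' : 6 * A₁ * min 1 (d b / (20 * A₁)) ≤ 6 * A₁ := by
          calc 6 * A₁ * min 1 (d b / (20 * A₁)) ≤ 6 * A₁ * 1 :=
                mul_le_mul_of_nonneg_left (min_le_left _ _) (by positivity)
            _ = 6 * A₁ := mul_one _
        have h3 : 6 * A₁ * (d b / (20 * A₁)) = 3 / 10 * d b := by field_simp; ring
        have hdist3 : dist z b ≤ 3 / 10 * d b := by nlinarith [hdzb, h2, h3]
        have hLip1 : d b ≤ d z + dist z b := by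
          calc d b ≤ d z + dist b z := hdLip b z
            _ = d z + dist z b := by rw [dist_comm]
        have hLip2 : d z ≤ d b + dist z b := hdLip z b
        have hub : d b ≤ 10 / 7 * d z := by nlinarith
        have hlb : 10 / 13 * d z ≤ d b := by nlinarith
        constructor
        · -- a z ≤ r b
          apply min_le_min le_rfl
          rw [div_le_div_iff₀ (by positivity) (by positivity)]
          nlinarith
        · -- dist z b ≤ 12 A₁ a z
          show dist z b ≤ 12 * A₁ * min 1 (d z / (26 * A₁))
          rcases le_or_gt (d z / (26 * A₁)) 1 with hcase | hcase
          · rw [min_eq_right hcase]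
            have he : 12 * A₁ * (d z / (26 * A₁)) = 6 / 13 * d z := by field_simp; ring
            rw [he]
            nlinarith
          · rw [min_eq_left (le_of_lt hcase)]
            have : 26 * A₁ < d z := by
              rw [lt_div_iff₀ (by positivity)] at hcase
              linarith
            nlinarith
    · -- U = univ
      rw [Set.not_nonempty_iff_eq_empty, compl_empty_iff] at hUc
      subst hUc
      refine aux_core hC₁ hA₁ hk hdbl ν₁ ν₂ hcomp _ isOpen_univ
        (fun _ => 1) (fun _ => 1) (fun _ _ => one_pos) (fun _ _ => le_rfl)
        (fun _ _ => Set.subset_univ _) (fun _ _ => one_pos) ?_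
      intro z _ b _ hdzb
      refine ⟨le_rfl, ?_⟩
      show dist z b ≤ 12 * A₁ * 1
      nlinarith
  -- step 2: outer regularity
  have hfinB : ν₂ B ≠ ∞ := measure_ne_top ν₂ B
  have hc₂0 : c₂ ≠ 0 := by
    rw [hc₂]
    simp only [ne_eq, ENNReal.ofReal_eq_zero, not_le]
    positivity
  have hc₂top : c₂ ≠ ∞ := ENNReal.ofReal_ne_top
  refine ENNReal.le_of_forall_pos_le_add fun ε hε hlt => ?_
  obtain ⟨U, hBU, hUo, hUlt⟩ :=
    B.exists_isOpen_lt_add hfinB (show (ε : ℝ≥0∞) / c₂ ≠ 0 by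
      simp [ENNReal.div_eq_zero_iff, hc₂top, (by exact_mod_cast hε.ne' : (ε:ℝ≥0∞) ≠ 0)])
  calc ν₁ B ≤ ν₁ U := measure_mono hBU
    _ ≤ c₂ * ν₂ U := hopen U hUo
    _ ≤ c₂ * (ν₂ B + ε / c₂) := mul_le_mul_right (le_of_lt hUlt) _
    _ = c₂ * ν₂ B + c₂ * (ε / c₂) := mul_add _ _ _
    _ ≤ c₂ * ν₂ B + ε := by
        gcongr
        exact ENNReal.mul_div_le
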